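/- Let p(x) be a homogeneous polynomial of degree d on ℝ^n and let s ∈ (0,1), a = 1−2s. Define q(x,y) = Σ_{0 ≤ k ≤ d/2} (-1)^k c_{2k} Δ^k p(x) · y^{2k}/(2k)!, where c_{2k} = ∏_{i=1}^k (2i−1)/(2i−2s) and Δ^k is the k-fold Laplacian in x. Then q is a polynomial of degree d on ℝ^{n+1}, symmetric in y, with q(x,0) = p(x), and q satisfies the extension equation Δ_x q + ∂_{yy} q + (a/y) ∂_y q = 0 at every point with y ≠ 0. -/

import Mathlib

noncomputable section

/-- Partial derivative in the `i`-th direction of a function on `ℝⁿ`. -/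
def pd {n : ℕ} (i : Fin n) (f : (Fin n → ℝ) → ℝ) (x : Fin n → ℝ) : ℝ :=
  deriv (fun t => f (Function.update x i t)) (x i)

/-- The Laplacian on `ℝⁿ` computed in coordinates. -/
def lap {n : ℕ} (f : (Fin n → ℝ) → ℝ) : (Fin n → ℝ) → ℝ :=
  fun x => ∑ i, pd i (pd i f) x

/-- The coefficients `c_{2k} = ∏_{i=1}^k (2i-1)/(2i-2s)`. -/
def cExt (s : ℝ) (k : ℕ) : ℝ :=
  ∏ i ∈ Finset.Icc 1 k, ((2 * (i : ℝ) - 1) / (2 * (i : ℝ) - 2 * s))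

/-- The explicit extension `q(x,y) = Σ_k (-1)^k c_{2k} Δ^k p(x) y^{2k}/(2k)!`. -/
def qExt (n : ℕ) (s : ℝ) (d : ℕ) (p : (Fin n → ℝ) → ℝ) (x : Fin n → ℝ) (y : ℝ) : ℝ :=
  ∑ k ∈ Finset.range (d / 2 + 1),
    (-1 : ℝ) ^ k * cExt s k * (lap^[k] p) x * y ^ (2 * k) / (Nat.factorial (2 * k) : ℝ)

open MvPolynomial

section Aux
lemma hasDerivAt_eval_update {n : ℕ} (Q : MvPolynomial (Fin n) ℝ) (i : Fin n)
    (x : Fin n → ℝ) (t : ℝ) :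
    HasDerivAt (fun t => eval (Function.update x i t) Q)
      (eval (Function.update x i t) (pderiv i Q)) t := by
  induction Q using MvPolynomial.induction_on with
  | C a => simpa using hasDerivAt_const t (a : ℝ)
  | add f g hf hg => simpa using (hf).fun_add hg
  | mul_X f j hf =>
      rcases eq_or_ne j i with rfl | hji
      · have : (fun t => eval (Function.update x j t) (f * X j)) =
            fun t => eval (Function.update x j t) f * t := by
          funext u; simp
        rw [this]
        have h2 := (hf).fun_mul (hasDerivAt_id t)
        simpa [pderiv_mul, pderiv_X_self, mul_comm, mul_assoc, mul_left_comm, add_comm] using h2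
      · have : (fun t => eval (Function.update x i t) (f * X j)) =
            fun t => eval (Function.update x i t) f * x j := by
          funext u; simp [Function.update_of_ne hji]
        rw [this]
        have h2 := (hf).mul_const (x j)
        simpa [pderiv_mul, pderiv_X_of_ne hji, Function.update_of_ne hji, mul_comm] using h2

lemma pd_eval {n : ℕ} (Q : MvPolynomial (Fin n) ℝ) (i : Fin n) :
    pd i (fun x => eval x Q) = fun x => eval x (pderiv i Q) := by
  funext x
  have h := (hasDerivAt_eval_update Q i x (x i)).deriv
  simpa [pd, Function.update_eq_self] using h

/-- The polynomial Laplacian. -/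
def LapP {n : ℕ} (Q : MvPolynomial (Fin n) ℝ) : MvPolynomial (Fin n) ℝ :=
  ∑ i, pderiv i (pderiv i Q)

lemma lap_eval {n : ℕ} (Q : MvPolynomial (Fin n) ℝ) :
    lap (fun x => eval x Q) = fun x => eval x (LapP Q) := by
  funext x
  rw [lap]
  have : ∀ i : Fin n, pd i (pd i fun x => eval x Q) x = eval x (pderiv i (pderiv i Q)) := by
    intro i; rw [pd_eval, pd_eval]
  simp only [this, LapP, map_sum]

lemma lap_iter_eval {n : ℕ} (Q : MvPolynomial (Fin n) ℝ) (k : ℕ) :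
    lap^[k] (fun x => eval x Q) = fun x => eval x (LapP^[k] Q) := by
  induction k generalizing Q with
  | zero => simp
  | succ k ih =>
      rw [Function.iterate_succ_apply, Function.iterate_succ_apply, lap_eval, ih]

lemma isHomogeneous_pderiv {n : ℕ} {Q : MvPolynomial (Fin n) ℝ} {m : ℕ} (i : Fin n)
    (h : Q.IsHomogeneous m) : (pderiv i Q).IsHomogeneous (m - 1) := by
  rw [← Q.support_sum_monomial_coeff, map_sum]
  apply IsHomogeneous.sum
  intro u hu
  rw [pderiv_monomial]
  rcases Nat.eq_zero_or_pos (u i) with h0 | h0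
  · rw [show (u i : ℝ) = 0 by exact_mod_cast h0]
    simp [isHomogeneous_zero]
  · apply isHomogeneous_monomial
    have hdeg : u.degree = m := by
      have := h (MvPolynomial.mem_support_iff.mp hu)
      rw [Finsupp.degree_eq_weight_one]; exact this
    have hsub : (u - Finsupp.single i 1) + Finsupp.single i 1 = u := by
      ext j
      rcases eq_or_ne j i with rfl | hj
      · simp only [Finsupp.add_apply, Finsupp.tsub_apply, Finsupp.single_eq_same]
        omega
      · simp [Finsupp.single_apply, hj, Finsupp.single_eq_of_ne (Ne.symm hj)]
    have hdeg2 : (u - Finsupp.single i 1).degree + 1 = m := by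
      have := congrArg Finsupp.degree hsub
      rw [Finsupp.degree_eq_weight_one] at this hdeg ⊢
      rw [map_add] at this
      have hsingle : Finsupp.weight 1 (Finsupp.single i 1) = 1 := by
        simp [Finsupp.weight_apply, Finsupp.sum_single_index]
      rw [show (Finsupp.weight fun _ : Fin n => 1) (Finsupp.single i 1) = 1 from hsingle] at this
      rw [this, hdeg]
    omega


lemma pderiv_eq_zero_of_isHomogeneous_zero {n : ℕ} {Q : MvPolynomial (Fin n) ℝ}
    (h : Q.IsHomogeneous 0) (i : Fin n) : pderiv i Q = 0 := by
  rw [← Q.support_sum_monomial_coeff, map_sum]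
  apply Finset.sum_eq_zero
  intro u hu
  have hui : u i = 0 := by
    have h1 := h (MvPolynomial.mem_support_iff.mp hu)
    have h2 : u.degree = 0 := by
      rw [Finsupp.degree_eq_weight_one]; exact h1
    have := Finsupp.le_degree i u
    omega
  rw [pderiv_monomial, hui]
  simp

lemma LapP_add {n : ℕ} (Q R : MvPolynomial (Fin n) ℝ) : LapP (Q + R) = LapP Q + LapP R := by
  simp [LapP, Finset.sum_add_distrib]

lemma LapP_C_mul {n : ℕ} (c : ℝ) (Q : MvPolynomial (Fin n) ℝ) :
    LapP (C c * Q) = C c * LapP Q := by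
  simp [LapP, pderiv_C_mul, Finset.mul_sum]

lemma LapP_sum {n : ℕ} {ι : Type*} (t : Finset ι) (f : ι → MvPolynomial (Fin n) ℝ) :
    LapP (∑ k ∈ t, f k) = ∑ k ∈ t, LapP (f k) := by
  classical
  induction t using Finset.induction_on with
  | empty => simp [LapP]
  | insert _ _ h ih => rw [Finset.sum_insert h, Finset.sum_insert h, LapP_add, ih]

lemma isHomogeneous_LapP {n : ℕ} {Q : MvPolynomial (Fin n) ℝ} {m : ℕ}
    (h : Q.IsHomogeneous m) : (LapP Q).IsHomogeneous (m - 2) := by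
  apply MvPolynomial.IsHomogeneous.sum
  intro i _
  have := isHomogeneous_pderiv i (isHomogeneous_pderiv i h)
  simpa [Nat.sub_sub] using this

lemma isHomogeneous_LapP_iter {n : ℕ} {P : MvPolynomial (Fin n) ℝ} {d : ℕ}
    (h : P.IsHomogeneous d) (k : ℕ) : (LapP^[k] P).IsHomogeneous (d - 2 * k) := by
  induction k with
  | zero => simpa using h
  | succ k ih =>
      rw [Function.iterate_succ_apply']
      have := isHomogeneous_LapP ih
      have e : d - 2 * k - 2 = d - 2 * (k + 1) := by omega
      rwa [e] at this

lemma LapP_eq_zero_of_le_one {n : ℕ} {Q : MvPolynomial (Fin n) ℝ} {m : ℕ}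
    (h : Q.IsHomogeneous m) (hm : m ≤ 1) : LapP Q = 0 := by
  apply Finset.sum_eq_zero
  intro i _
  have h1 : (pderiv i Q).IsHomogeneous 0 := by
    have := isHomogeneous_pderiv i h
    rwa [show m - 1 = 0 by omega] at this
  exact pderiv_eq_zero_of_isHomogeneous_zero h1 i

lemma LapP_iter_top {n : ℕ} {P : MvPolynomial (Fin n) ℝ} {d : ℕ}
    (h : P.IsHomogeneous d) : LapP^[d / 2 + 1] P = 0 := by
  rw [Function.iterate_succ_apply']
  exact LapP_eq_zero_of_le_one (isHomogeneous_LapP_iter h (d / 2)) (by omega)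

lemma cExt_zero (s : ℝ) : cExt s 0 = 1 := by simp [cExt]

lemma cExt_succ (s : ℝ) (k : ℕ) :
    cExt s (k + 1) = cExt s k * ((2 * k + 1) / (2 * k + 2 - 2 * s)) := by
  rw [cExt, Finset.prod_Icc_succ_top (by omega : 1 ≤ k + 1), ← cExt]
  push_cast
  ring_nf

lemma hasDerivAt_poly_sum (K : ℕ) (a : ℕ → ℝ) (e : ℕ → ℕ) (y : ℝ) :
    HasDerivAt (fun t => ∑ k ∈ Finset.range K, a k * t ^ e k)
      (∑ k ∈ Finset.range K, a k * (e k) * y ^ (e k - 1)) y := by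
  apply HasDerivAt.fun_sum
  intro k _
  simpa [mul_assoc, mul_comm, mul_left_comm] using (hasDerivAt_pow (e k) y).const_mul (a k)

end Aux

/-- For a nonzero homogeneous polynomial `p` of degree `d` on `ℝⁿ` and
`s ∈ (0,1)`, `a = 1-2s`, the explicit function `qExt` is a polynomial of degree `d` on
`ℝ^{n+1}`, symmetric in `y`, restricting to `p` on `{y=0}`, and solves the extension
equation `Δ_x q + ∂_{yy} q + (a/y)∂_y q = 0` away from `{y=0}`. -/
theorem explicit_even_extension (n d : ℕ) (s : ℝ) (hs : s ∈ Set.Ioo (0 : ℝ) 1)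
    (P : MvPolynomial (Fin n) ℝ) (hP : P.IsHomogeneous d) (hP0 : P ≠ 0)
    (p : (Fin n → ℝ) → ℝ) (hp : ∀ x, p x = MvPolynomial.eval x P) :
    (∃ Q : MvPolynomial (Fin (n + 1)) ℝ, Q.totalDegree = d ∧
      ∀ (x : Fin n → ℝ) (y : ℝ), qExt n s d p x y = MvPolynomial.eval (Fin.snoc x y) Q) ∧
    (∀ (x : Fin n → ℝ) (y : ℝ), qExt n s d p x (-y) = qExt n s d p x y) ∧
    (∀ x : Fin n → ℝ, qExt n s d p x 0 = p x) ∧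
    (∀ (x : Fin n → ℝ) (y : ℝ), y ≠ 0 →
      lap (fun x' => qExt n s d p x' y) x +
        deriv (deriv (fun t => qExt n s d p x t)) y +
        ((1 - 2 * s) / y) * deriv (fun t => qExt n s d p x t) y = 0) := by
  classical
  obtain ⟨hs0, hs1⟩ := hs
  have hpf : p = fun x => eval x P := funext hp
  -- Part 3
  have part3 : ∀ x : Fin n → ℝ, qExt n s d p x 0 = p x := by
    intro x
    rw [qExt, Finset.sum_eq_single 0]
    · simp [cExt_zero]
    · intro k _ hk0
      rw [zero_pow (by omega : 2 * k ≠ 0)]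
      simp
    · intro h
      exact absurd (Finset.mem_range.mpr (by omega)) h
  -- Part 2
  have part2 : ∀ (x : Fin n → ℝ) (y : ℝ), qExt n s d p x (-y) = qExt n s d p x y := by
    intro x y
    rw [qExt, qExt]
    refine Finset.sum_congr rfl fun k _ => ?_
    rw [(even_two_mul k).neg_pow]
  refine ⟨?_, part2, part3, ?_⟩
  · -- Part 1
    obtain ⟨x0, hx0⟩ : ∃ x0, eval x0 P ≠ 0 := by
      by_contra h
      push_neg at h
      exact hP0 (MvPolynomial.funext (fun x => by simpa using h x))
    have heval : ∀ (x : Fin n → ℝ) (y : ℝ), qExt n s d p x y =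
        eval (Fin.snoc x y) (∑ k ∈ Finset.range (d / 2 + 1),
          C ((-1 : ℝ) ^ k * cExt s k / (Nat.factorial (2 * k) : ℝ)) *
            (rename Fin.castSucc (LapP^[k] P)) * (X (Fin.last n)) ^ (2 * k)) := by
      intro x y
      rw [qExt, map_sum]
      refine Finset.sum_congr rfl fun k _ => ?_
      have hcomp : (Fin.snoc x y : Fin (n + 1) → ℝ) ∘ Fin.castSucc = x := by
        funext i; simp
      rw [hpf, lap_iter_eval]
      simp only [map_mul, eval_C, eval_rename, hcomp, map_pow, eval_X, Fin.snoc_last]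
      ring
    have hhom : (∑ k ∈ Finset.range (d / 2 + 1),
        C ((-1 : ℝ) ^ k * cExt s k / (Nat.factorial (2 * k) : ℝ)) *
          (rename Fin.castSucc (LapP^[k] P)) * (X (Fin.last n)) ^ (2 * k)).IsHomogeneous d := by
      apply MvPolynomial.IsHomogeneous.sum
      intro k hk
      have h2k : 2 * k ≤ d := by
        have := Finset.mem_range.mp hk; omega
      have h1 := MvPolynomial.isHomogeneous_C (Fin (n + 1))
        ((-1 : ℝ) ^ k * cExt s k / (Nat.factorial (2 * k) : ℝ))
      have h2 := (isHomogeneous_LapP_iter hP k).rename_isHomogeneous (f := Fin.castSucc)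
      have h3 : ((X (Fin.last n) : MvPolynomial (Fin (n + 1)) ℝ) ^ (2 * k)).IsHomogeneous
          (2 * k) := by
        exact MvPolynomial.isHomogeneous_X_pow _ _
      have := (h1.mul h2).mul h3
      rwa [show 0 + (d - 2 * k) + 2 * k = d by omega] at this
    refine ⟨_, hhom.totalDegree ?_, heval⟩
    intro hQ0
    have h0 := heval x0 0
    rw [hQ0, part3, hp x0] at h0
    simp only [map_zero] at h0
    exact hx0 h0
  · -- Part 4: the PDE
    intro x y hy
    set A : ℕ → ℝ := fun j => eval x (LapP^[j] P) with hA
    have hAtop : A (d / 2 + 1) = 0 := by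
      simp only [hA, LapP_iter_top hP, map_zero]
    set b : ℕ → ℝ := fun k => (-1 : ℝ) ^ k * cExt s k * A k / (Nat.factorial (2 * k) : ℝ)
      with hb
    -- the x-Laplacian
    have hlapterm : lap (fun x' => qExt n s d p x' y) x
        = ∑ k ∈ Finset.range (d / 2 + 1),
            (-1 : ℝ) ^ k * cExt s k * y ^ (2 * k) / (Nat.factorial (2 * k) : ℝ) * A (k + 1) := by
      have hfun : (fun x' => qExt n s d p x' y)
          = fun x' => eval x' (∑ k ∈ Finset.range (d / 2 + 1),
              C ((-1 : ℝ) ^ k * cExt s k * y ^ (2 * k) / (Nat.factorial (2 * k) : ℝ)) *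
                LapP^[k] P) := by
        funext x'
        rw [qExt, map_sum]
        refine Finset.sum_congr rfl fun k _ => ?_
        rw [hpf, lap_iter_eval]
        simp only [map_mul, eval_C]
        ring
      rw [hfun, lap_eval]
      beta_reduce
      rw [LapP_sum, map_sum]
      refine Finset.sum_congr rfl fun k _ => ?_
      rw [LapP_C_mul, ← Function.iterate_succ_apply' LapP k P]
      simp only [map_mul, eval_C, hA]
    -- expression in y
    have hqy : (fun t => qExt n s d p x t)
        = fun t => ∑ k ∈ Finset.range (d / 2 + 1), b k * t ^ (2 * k) := by
      funext t
      rw [qExt]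
      refine Finset.sum_congr rfl fun k _ => ?_
      rw [hpf, lap_iter_eval, hb]
      simp only [hA]
      ring
    have hD1 : deriv (fun t => qExt n s d p x t)
        = fun t => ∑ k ∈ Finset.range (d / 2 + 1),
            b k * ((2 * k : ℕ) : ℝ) * t ^ (2 * k - 1) := by
      funext t
      rw [hqy]
      exact (hasDerivAt_poly_sum (d / 2 + 1) b (fun k => 2 * k) t).deriv
    have hD2 : deriv (deriv (fun t => qExt n s d p x t)) y
        = ∑ k ∈ Finset.range (d / 2 + 1),
            b k * ((2 * k : ℕ) : ℝ) * ((2 * k - 1 : ℕ) : ℝ) * y ^ (2 * k - 1 - 1) := by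
      rw [hD1]
      have := (hasDerivAt_poly_sum (d / 2 + 1) (fun k => b k * ((2 * k : ℕ) : ℝ))
        (fun k => 2 * k - 1) y).deriv
      rw [this]
    rw [hlapterm, hD2, hD1]
    -- peel and reindex the sums
    have e1 : ∑ k ∈ Finset.range (d / 2 + 1),
        (-1 : ℝ) ^ k * cExt s k * y ^ (2 * k) / (Nat.factorial (2 * k) : ℝ) * A (k + 1)
        = ∑ k ∈ Finset.range (d / 2),
        (-1 : ℝ) ^ k * cExt s k * y ^ (2 * k) / (Nat.factorial (2 * k) : ℝ) * A (k + 1) := by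
      rw [Finset.sum_range_succ, hAtop]
      simp
    have e2 : ∑ k ∈ Finset.range (d / 2 + 1),
        b k * ((2 * k : ℕ) : ℝ) * ((2 * k - 1 : ℕ) : ℝ) * y ^ (2 * k - 1 - 1)
        = ∑ k ∈ Finset.range (d / 2),
        b (k + 1) * ((2 * (k + 1) : ℕ) : ℝ) * ((2 * (k + 1) - 1 : ℕ) : ℝ) *
          y ^ (2 * (k + 1) - 1 - 1) := by
      rw [Finset.sum_range_succ']
      simp
    have e3 : ((1 - 2 * s) / y) * ∑ k ∈ Finset.range (d / 2 + 1),
        b k * ((2 * k : ℕ) : ℝ) * y ^ (2 * k - 1)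
        = ∑ k ∈ Finset.range (d / 2),
        ((1 - 2 * s) / y) * (b (k + 1) * ((2 * (k + 1) : ℕ) : ℝ) * y ^ (2 * (k + 1) - 1)) := by
      rw [Finset.mul_sum, Finset.sum_range_succ']
      simp
    rw [e1, e2, e3, ← Finset.sum_add_distrib, ← Finset.sum_add_distrib]
    apply Finset.sum_eq_zero
    intro k _
    -- termwise identity
    rw [show 2 * (k + 1) - 1 - 1 = 2 * k from by omega,
      show (2 * (k + 1) - 1 : ℕ) = 2 * k + 1 from by omega,
      show 2 * (k + 1) = 2 * k + 2 from by omega]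
    simp only [hb]
    have hfac1 : ((2 * k + 2).factorial : ℝ)
        = ((2 * k + 2 : ℕ) : ℝ) * ((2 * k + 1 : ℕ) : ℝ) * ((2 * k).factorial : ℝ) := by
      rw [show 2 * k + 2 = (2 * k + 1) + 1 from rfl, Nat.factorial_succ, Nat.factorial_succ]
      push_cast
      ring
    have hcsucc : cExt s (k + 1) = cExt s k * ((2 * k + 1) / (2 * k + 2 - 2 * s)) :=
      cExt_succ s k
    have hfac0 : ((2 * k).factorial : ℝ) ≠ 0 :=
      Nat.cast_ne_zero.mpr (Nat.factorial_ne_zero _)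
    have hden : (2 * (k : ℝ) + 2 - 2 * s) ≠ 0 := by
      have hk0 : (0 : ℝ) ≤ (k : ℝ) := Nat.cast_nonneg k
      nlinarith
    have hden2 : (1 + (k : ℝ) - s) ≠ 0 := by
      have hk0 : (0 : ℝ) ≤ (k : ℝ) := Nat.cast_nonneg k
      nlinarith
    rw [show 2 * (k + 1) = 2 * k + 2 from by omega, hfac1, hcsucc]
    rw [show y ^ (2 * k + 1) = y ^ (2 * k) * y from pow_succ y (2 * k)]
    push_cast
    field_simp
    ring_nf
    field_simp
    ring
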